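/- Let H and ΔH be Hermitian n×n complex matrices, set H̃ = H + ΔH, and let ħ > 0. Let t ↦ ρ_t and t ↦ ρ̃_t be differentiable families of positive definite, unit-trace n×n complex matrices satisfying iħ dρ_t/dt = [H, ρ_t] and iħ dρ̃_t/dt = [H̃, ρ̃_t] (possibly with different initial conditions). Then the quantum relative entropy D(ρ_t‖ρ̃_t) = tr(ρ_t(log ρ_t − log ρ̃_t)) is differentiable in t and d/dt D(ρ_t‖ρ̃_t) = (i/ħ) tr(ρ_t [ΔH, log ρ̃_t]). -/

import Mathlib

open Matrix
open scoped ComplexOrder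

/-- Matrix logarithm of a Hermitian matrix, defined through the functional calculus
on its (real) spectrum. -/
noncomputable def mlog {n : ℕ} {A : Matrix (Fin n) (Fin n) ℂ} (hA : A.IsHermitian) :
    Matrix (Fin n) (Fin n) ℂ :=
  hA.cfc Real.log

section Conj

variable {m : ℕ}

/-- Conjugation by a unitary matrix as a star algebra homomorphism. -/
noncomputable def conjSAH (U : Matrix (Fin m) (Fin m) ℂ) (hU : U * Uᴴ = 1) (hU' : Uᴴ * U = 1) :
    Matrix (Fin m) (Fin m) ℂ →⋆ₐ[ℂ] Matrix (Fin m) (Fin m) ℂ where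
  toFun M := U * M * Uᴴ
  map_one' := by simpa using hU
  map_mul' M N := by
    simp only [mul_assoc]
    rw [← mul_assoc Uᴴ U, hU', one_mul]
  map_zero' := by simp
  map_add' M N := by simp [mul_add, add_mul]
  commutes' c := by
    simp [Algebra.algebraMap_eq_smul_one, mul_smul_comm, smul_mul_assoc, hU]
  map_star' M := by
    simp [star_eq_conjTranspose, conjTranspose_mul, mul_assoc]

/-- `mlog` intertwines conjugation by a unitary matrix. -/
theorem mlog_conj (U A B : Matrix (Fin m) (Fin m) ℂ) (hU : U * Uᴴ = 1) (hU' : Uᴴ * U = 1)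
    (hA : A.PosDef) (hB : B.IsHermitian) (hBeq : B = U * A * Uᴴ) :
    mlog hB = U * mlog hA.1 * Uᴴ := by
  subst hBeq
  have hsa : IsSelfAdjoint A := hA.1
  have hsa' : IsSelfAdjoint (U * A * Uᴴ) := hB
  have hlog : ContinuousOn Real.log (spectrum ℝ A) := by
    apply Real.continuousOn_log.mono
    rw [hA.1.spectrum_real_eq_range_eigenvalues]
    rintro x ⟨i, rfl⟩
    exact (hA.eigenvalues_pos i).ne'
  have hcont : Continuous (conjSAH U hU hU') := by
    show Continuous fun M : Matrix (Fin m) (Fin m) ℂ => U * M * Uᴴ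
    exact (continuous_const.matrix_mul continuous_id).matrix_mul continuous_const
  have h2 : (conjSAH U hU hU') (cfc Real.log A) = cfc Real.log ((conjSAH U hU hU') A) :=
    StarAlgHom.map_cfc (conjSAH U hU hU') Real.log A hlog hcont hsa hsa'
  have h3 : (conjSAH U hU hU') A = U * A * Uᴴ := rfl
  calc mlog hB = cfc Real.log (U * A * Uᴴ) := (hB.cfc_eq Real.log).symm
    _ = (conjSAH U hU hU') (cfc Real.log A) := by rw [h2, h3]
    _ = U * cfc Real.log A * Uᴴ := rfl
    _ = U * mlog hA.1 * Uᴴ := by rw [hA.1.cfc_eq Real.log]; rfl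

end Conj

section Flow

open NormedSpace

variable {m : ℕ}

attribute [local instance] Matrix.linftyOpSemiNormedRing Matrix.linftyOpNormedRing
  Matrix.linftyOpNormedAlgebra

/-- Entrywise differentiability gives differentiability as a matrix-valued function. -/
theorem hasDerivAt_matrix {f : ℝ → Matrix (Fin m) (Fin m) ℂ}
    {f' : Matrix (Fin m) (Fin m) ℂ} {t : ℝ}
    (h : ∀ i j, HasDerivAt (fun s => f s i j) (f' i j) t) : HasDerivAt f f' t := by
  have key : HasDerivAt (fun s => ∑ i : Fin m, ∑ j : Fin m,
        single i j (f s i j)) (∑ i : Fin m, ∑ j : Fin m,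
        single i j (f' i j)) t := by
    apply HasDerivAt.fun_sum
    intro i _
    apply HasDerivAt.fun_sum
    intro j _
    have h' := (h i j).smul_const (single i j (1 : ℂ))
    simpa only [smul_single, smul_eq_mul, mul_one] using h'
  have e1 : f = fun s => ∑ i : Fin m, ∑ j : Fin m, single i j (f s i j) := by
    funext s; exact matrix_eq_sum_single (f s)
  have e2 : f' = ∑ i : Fin m, ∑ j : Fin m, single i j (f' i j) :=
    matrix_eq_sum_single f'
  rw [e1, e2]
  exact key

theorem exp_smul_mul_exp_smul (K : Matrix (Fin m) (Fin m) ℂ) (a b : ℝ) :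
    exp (a • K) * exp (b • K) = exp ((a + b) • K) := by
  rw [add_smul, Matrix.exp_add_of_commute _ _ (((Commute.refl K).smul_left a).smul_right b)]

theorem hasDerivAt_exp_shift (K : Matrix (Fin m) (Fin m) ℂ) (t u : ℝ) :
    HasDerivAt (fun s : ℝ => exp ((s - t) • K)) (exp ((u - t) • K) * K) u := by
  have h1 : HasDerivAt (fun v : ℝ => exp (v • K)) (exp ((u - t) • K) * K) (u - t) :=
    hasDerivAt_exp_smul_const K (u - t)
  have h2 : HasDerivAt (fun s : ℝ => s - t) 1 u := (hasDerivAt_id u).sub_const t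
  have h := h1.scomp u h2
  simp only [Function.comp_def, one_smul] at h
  exact h

theorem hasDerivAt_exp_shift' (K : Matrix (Fin m) (Fin m) ℂ) (t u : ℝ) :
    HasDerivAt (fun s : ℝ => exp ((t - s) • K)) (-(exp ((t - u) • K) * K)) u := by
  have h1 : HasDerivAt (fun v : ℝ => exp (v • K)) (exp ((t - u) • K) * K) (t - u) :=
    hasDerivAt_exp_smul_const K (t - u)
  have h2 : HasDerivAt (fun s : ℝ => t - s) (-1) u := (hasDerivAt_id u).const_sub t
  have h := h1.scomp u h2
  simp only [Function.comp_def, neg_smul, one_smul] at h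
  exact h

/-- Solutions of the commutator equation `f' = [K, f]` are conjugation flows. -/
theorem flow_repr (K : Matrix (Fin m) (Fin m) ℂ)
    (f f' : ℝ → Matrix (Fin m) (Fin m) ℂ)
    (hdiff : ∀ u i j, HasDerivAt (fun s => f s i j) (f' u i j) u)
    (heq : ∀ u, f' u = K * f u - f u * K) (t s : ℝ) :
    f s = exp ((s - t) • K) * f t * exp ((t - s) • K) := by
  set g : ℝ → Matrix (Fin m) (Fin m) ℂ :=
    fun u => exp ((-u) • K) * f u * exp (u • K) with hg
  have hgderiv : ∀ u, HasDerivAt g 0 u := by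
    intro u
    have hf : HasDerivAt f (f' u) u := hasDerivAt_matrix (hdiff u)
    have h1 : HasDerivAt (fun v : ℝ => exp ((-v) • K)) (-(exp ((-u) • K) * K)) u := by
      have ha : HasDerivAt (fun v : ℝ => exp (v • K)) (exp ((-u) • K) * K) (-u) :=
        hasDerivAt_exp_smul_const K (-u)
      have hb : HasDerivAt (fun v : ℝ => -v) (-1 : ℝ) u := hasDerivAt_neg u
      have h := ha.scomp u hb
      simp only [Function.comp_def, neg_smul, one_smul] at h ⊢
      exact h
    have h3 : HasDerivAt (fun v : ℝ => exp (v • K)) (exp (u • K) * K) u :=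
      hasDerivAt_exp_smul_const K u
    have hD := (h1.mul hf).mul h3
    have hcomm : K * exp (u • K) = exp (u • K) * K :=
      (((Commute.refl K).smul_right u).exp_right)
    have hzero : (-(exp ((-u) • K) * K) * f u + exp ((-u) • K) * f' u) * exp (u • K) +
        exp ((-u) • K) * f u * (exp (u • K) * K) = 0 := by
      rw [heq u]
      simp only [mul_sub, sub_mul, add_mul, mul_add, neg_mul, mul_assoc]
      rw [← hcomm]
      abel
    simp only [Pi.mul_apply] at hD
    rw [hzero] at hD
    exact hD
  have hconst : g s = g t :=
    is_const_of_deriv_eq_zero (fun u => (hgderiv u).differentiableAt)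
      (fun u => (hgderiv u).deriv) s t
  have hconst' : exp ((-s) • K) * f s * exp (s • K)
      = exp ((-t) • K) * f t * exp (t • K) := hconst
  have key : ∀ (a : ℝ) (X : Matrix (Fin m) (Fin m) ℂ),
      exp (s • K) * (exp ((-a) • K) * X * exp (a • K)) * exp ((-s) • K)
        = exp ((s - a) • K) * X * exp ((a - s) • K) := by
    intro a X
    calc exp (s • K) * (exp ((-a) • K) * X * exp (a • K)) * exp ((-s) • K)
        = (exp (s • K) * exp ((-a) • K)) * X * (exp (a • K) * exp ((-s) • K)) := by
          noncomm_ring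
      _ = exp ((s + -a) • K) * X * exp ((a + -s) • K) := by
          rw [exp_smul_mul_exp_smul, exp_smul_mul_exp_smul]
      _ = exp ((s - a) • K) * X * exp ((a - s) • K) := by
          rw [show s + -a = s - a from (sub_eq_add_neg s a).symm,
            show a + -s = a - s from (sub_eq_add_neg a s).symm]
  calc f s = exp ((s - s) • K) * f s * exp ((s - s) • K) := by
        rw [sub_self, zero_smul, exp_zero, one_mul, mul_one]
    _ = exp (s • K) * (exp ((-s) • K) * f s * exp (s • K)) * exp ((-s) • K) :=
        (key s (f s)).symm
    _ = exp (s • K) * (exp ((-t) • K) * f t * exp (t • K)) * exp ((-s) • K) := by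
        rw [hconst']
    _ = exp ((s - t) • K) * f t * exp ((t - s) • K) := key t (f t)

theorem exp_shift_unit (K : Matrix (Fin m) (Fin m) ℂ) (t s : ℝ) :
    exp ((s - t) • K) * exp ((t - s) • K) = 1 := by
  rw [exp_smul_mul_exp_smul, show s - t + (t - s) = 0 by ring, zero_smul, exp_zero]

theorem exp_shift_conjTranspose (K : Matrix (Fin m) (Fin m) ℂ) (hK : Kᴴ = -K) (a : ℝ) :
    (exp (a • K))ᴴ = exp ((-a) • K) := by
  have hsm : (a • K)ᴴ = a • Kᴴ := by
    ext i j
    simp [conjTranspose_apply]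
  have h := Matrix.exp_conjTranspose (a • K)
  rw [hsm, hK, smul_neg, ← neg_smul] at h
  exact h.symm

/-- The derivative of the mixed trace term. -/
theorem key_deriv (K₁ K₂ P L : Matrix (Fin m) (Fin m) ℂ) (t : ℝ) :
    HasDerivAt (fun s => Matrix.trace
      (exp ((s - t) • K₁) * P * exp ((t - s) • K₁) *
        (exp ((s - t) • K₂) * L * exp ((t - s) • K₂))))
      (Matrix.trace (K₁ * P * L - P * K₁ * L + P * K₂ * L - P * L * K₂)) t := by
  have h₁ := hasDerivAt_exp_shift K₁ t t
  have h₂ := hasDerivAt_exp_shift' K₁ t t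
  have h₃ := hasDerivAt_exp_shift K₂ t t
  have h₄ := hasDerivAt_exp_shift' K₂ t t
  have hA := ((h₁.mul_const P).mul h₂).mul ((h₃.mul_const L).mul h₄)
  simp only [Pi.mul_apply, sub_self, zero_smul, exp_zero, one_mul, mul_one] at hA
  have hT := HasFDerivAt.comp_hasDerivAt t
    (((Matrix.traceLinearMap (Fin m) ℂ ℂ).toContinuousLinearMap.restrictScalars ℝ).hasFDerivAt) hA
  simp only [Function.comp_def, ContinuousLinearMap.coe_restrictScalars',
    LinearMap.coe_toContinuousLinearMap', Matrix.traceLinearMap_apply] at hT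
  convert hT using 2
  rfl
  rfl
  noncomm_ring
  rfl

theorem trace_conj_mul_conj (U V P M : Matrix (Fin m) (Fin m) ℂ) (hVU : V * U = 1) :
    Matrix.trace (U * P * V * (U * M * V)) = Matrix.trace (P * M) := by
  have h1 : U * P * V * (U * M * V) = U * (P * M) * V := by
    calc U * P * V * (U * M * V) = U * (P * ((V * U) * (M * V))) := by noncomm_ring
      _ = U * (P * M) * V := by rw [hVU, one_mul]; noncomm_ring
  rw [h1, Matrix.trace_mul_cycle, hVU, one_mul]

end Flow

open NormedSpace

/-- **Relative entropy production for perturbed closed quantum evolutions.**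
If `ρ_t` and `ρ̃_t` (written `τ`) are differentiable families of positive definite unit-trace
matrices solving the Landau–von Neumann equations `ihbar dρ/dt = [H, ρ]` and
`ihbar dρ̃/dt = [H + ΔH, ρ̃]`, then `D(ρ_t‖ρ̃_t) = tr(ρ_t(log ρ_t - log ρ̃_t))` is differentiable
and `d/dt D(ρ_t‖ρ̃_t) = (i/hbar) tr(ρ_t [ΔH, log ρ̃_t])`. -/
theorem quantum_relative_entropy_production_closed
    {n : ℕ} (H ΔH : Matrix (Fin n) (Fin n) ℂ)
    (hH : H.IsHermitian) (hΔH : ΔH.IsHermitian)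
    (hbar : ℝ) (hpos : 0 < hbar)
    (ρ τ ρ' τ' : ℝ → Matrix (Fin n) (Fin n) ℂ)
    (hρpd : ∀ t, (ρ t).PosDef) (hτpd : ∀ t, (τ t).PosDef)
    (hρtr : ∀ t, (ρ t).trace = 1) (hτtr : ∀ t, (τ t).trace = 1)
    (hρdiff : ∀ t i j, HasDerivAt (fun s => ρ s i j) (ρ' t i j) t)
    (hτdiff : ∀ t i j, HasDerivAt (fun s => τ s i j) (τ' t i j) t)
    -- Landau–von Neumann equations: ihbar dρ/dt = [H, ρ], ihbar dρ̃/dt = [H + ΔH, ρ̃]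
    (hρeq : ∀ t, (Complex.I * (hbar : ℂ)) • ρ' t = H * ρ t - ρ t * H)
    (hτeq : ∀ t, (Complex.I * (hbar : ℂ)) • τ' t = (H + ΔH) * τ t - τ t * (H + ΔH)) :
    ∀ t : ℝ, HasDerivAt
      (fun s => Matrix.trace (ρ s * (mlog (hρpd s).1 - mlog (hτpd s).1)))
      ((Complex.I / (hbar : ℂ)) *
        Matrix.trace (ρ t * (ΔH * mlog (hτpd t).1 - mlog (hτpd t).1 * ΔH))) t := by
  intro t
  have hbC : (Complex.I * (hbar : ℂ)) ≠ 0 :=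
    mul_ne_zero Complex.I_ne_zero (by exact_mod_cast hpos.ne')
  have hHΔ : (H + ΔH).IsHermitian := hH.add hΔH
  have hstarc : star ((Complex.I * (hbar : ℂ))⁻¹) = -(Complex.I * (hbar : ℂ))⁻¹ := by
    simp [Complex.star_def, map_inv₀, _root_.map_mul, Complex.conj_I, Complex.conj_ofReal,
      neg_mul, inv_neg]
  have hKs : ∀ (M : Matrix (Fin n) (Fin n) ℂ), M.IsHermitian →
      ((Complex.I * (hbar : ℂ))⁻¹ • M)ᴴ = -((Complex.I * (hbar : ℂ))⁻¹ • M) := by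
    intro M hM
    rw [conjTranspose_smul, hM.eq, hstarc, neg_smul]
  have heq₁ : ∀ u, ρ' u = ((Complex.I * (hbar : ℂ))⁻¹ • H) * ρ u
      - ρ u * ((Complex.I * (hbar : ℂ))⁻¹ • H) := by
    intro u
    rw [smul_mul_assoc, mul_smul_comm, ← smul_sub, ← hρeq u, smul_smul,
      inv_mul_cancel₀ hbC, one_smul]
  have heq₂ : ∀ u, τ' u = ((Complex.I * (hbar : ℂ))⁻¹ • (H + ΔH)) * τ u
      - τ u * ((Complex.I * (hbar : ℂ))⁻¹ • (H + ΔH)) := by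
    intro u
    rw [smul_mul_assoc, mul_smul_comm, ← smul_sub, ← hτeq u, smul_smul,
      inv_mul_cancel₀ hbC, one_smul]
  set K₁ : Matrix (Fin n) (Fin n) ℂ := (Complex.I * (hbar : ℂ))⁻¹ • H with hK₁def
  set K₂ : Matrix (Fin n) (Fin n) ℂ := (Complex.I * (hbar : ℂ))⁻¹ • (H + ΔH) with hK₂def
  have hrepr₁ : ∀ s, ρ s = exp ((s - t) • K₁) * ρ t * exp ((t - s) • K₁) :=
    fun s => flow_repr K₁ ρ ρ' hρdiff heq₁ t s
  have hrepr₂ : ∀ s, τ s = exp ((s - t) • K₂) * τ t * exp ((t - s) • K₂) :=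
    fun s => flow_repr K₂ τ τ' hτdiff heq₂ t s
  have hU₁ : ∀ s : ℝ, (exp ((s - t) • K₁))ᴴ = exp ((t - s) • K₁) := by
    intro s
    have h := exp_shift_conjTranspose K₁ (hKs H hH) (s - t)
    rwa [neg_sub] at h
  have hU₂ : ∀ s : ℝ, (exp ((s - t) • K₂))ᴴ = exp ((t - s) • K₂) := by
    intro s
    have h := exp_shift_conjTranspose K₂ (hKs (H + ΔH) hHΔ) (s - t)
    rwa [neg_sub] at h
  have hUU₁ : ∀ s : ℝ, exp ((s - t) • K₁) * (exp ((s - t) • K₁))ᴴ = 1 := by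
    intro s; rw [hU₁ s]; exact exp_shift_unit K₁ t s
  have hU'U₁ : ∀ s : ℝ, (exp ((s - t) • K₁))ᴴ * exp ((s - t) • K₁) = 1 := by
    intro s; rw [hU₁ s]; exact exp_shift_unit K₁ s t
  have hUU₂ : ∀ s : ℝ, exp ((s - t) • K₂) * (exp ((s - t) • K₂))ᴴ = 1 := by
    intro s; rw [hU₂ s]; exact exp_shift_unit K₂ t s
  have hU'U₂ : ∀ s : ℝ, (exp ((s - t) • K₂))ᴴ * exp ((s - t) • K₂) = 1 := by
    intro s; rw [hU₂ s]; exact exp_shift_unit K₂ s t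
  have hρlog : ∀ s, mlog (hρpd s).1
      = exp ((s - t) • K₁) * mlog (hρpd t).1 * exp ((t - s) • K₁) := by
    intro s
    have h := mlog_conj (exp ((s - t) • K₁)) (ρ t) (ρ s) (hUU₁ s) (hU'U₁ s)
      (hρpd t) (hρpd s).1 (by rw [hU₁ s]; exact hrepr₁ s)
    rwa [hU₁ s] at h
  have hτlog : ∀ s, mlog (hτpd s).1
      = exp ((s - t) • K₂) * mlog (hτpd t).1 * exp ((t - s) • K₂) := by
    intro s
    have h := mlog_conj (exp ((s - t) • K₂)) (τ t) (τ s) (hUU₂ s) (hU'U₂ s)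
      (hτpd t) (hτpd s).1 (by rw [hU₂ s]; exact hrepr₂ s)
    rwa [hU₂ s] at h
  have hfe : (fun s => Matrix.trace (ρ s * (mlog (hρpd s).1 - mlog (hτpd s).1)))
      = fun s => Matrix.trace (ρ t * mlog (hρpd t).1)
          - Matrix.trace (exp ((s - t) • K₁) * ρ t * exp ((t - s) • K₁) *
              (exp ((s - t) • K₂) * mlog (hτpd t).1 * exp ((t - s) • K₂))) := by
    funext s
    rw [mul_sub, Matrix.trace_sub, hρlog s, hτlog s, hrepr₁ s,
      trace_conj_mul_conj _ _ _ _ (exp_shift_unit K₁ s t)]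
  have hG := key_deriv K₁ K₂ (ρ t) (mlog (hτpd t).1) t
  have hmain := (hasDerivAt_const t (Matrix.trace (ρ t * mlog (hρpd t).1))).sub hG
  rw [hfe]
  convert hmain using 1
  rfl
  rfl
  have hinv : (Complex.I * (hbar : ℂ))⁻¹ = -(Complex.I / (hbar : ℂ)) := by
    rw [mul_inv, Complex.inv_I, div_eq_mul_inv]
    ring
  rw [hK₁def, hK₂def, hinv]
  simp only [mul_sub, sub_mul, mul_add, add_mul, smul_mul_assoc, mul_smul_comm,
    smul_add, smul_sub, ← mul_assoc, Matrix.trace_sub, Matrix.trace_add,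
    Matrix.trace_smul, smul_eq_mul, zero_sub]
  rw [show Matrix.trace (H * ρ t * mlog (hτpd t).1)
      = Matrix.trace (ρ t * mlog (hτpd t).1 * H) by
    rw [Matrix.trace_mul_cycle, Matrix.trace_mul_cycle]]
  ring
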